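/- arXiv:1708.06543 — 2 statements merged into one kernel-verified Lean document; each statement's English description precedes it below -/
import Mathlib

section
/- (Stein/Bussgang lemma for the Gaussian measure.) Let v > 0 and let μ be the centered Gaussian measure on ℝ with mean 0 and variance v. Let f : ℝ → ℝ be differentiable, suppose that x ↦ x·f(x) is μ-integrable, that the derivative f′ is μ-integrable, and that f(x)·exp(−x²/(2v)) tends to 0 as x → +∞ and as x → −∞. Then ∫ x·f(x) dμ(x) = v · ∫ f′(x) dμ(x). -/
open MeasureTheory ProbabilityTheory Filter
open scoped NNReal ENNReal

lemma gauss_integral_eq (v : ℝ≥0) (hv : v ≠ 0) (g : ℝ → ℝ) :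
    ∫ x, g x ∂(gaussianReal 0 v) = ∫ x, gaussianPDFReal 0 v x * g x := by
  rw [gaussianReal_of_var_ne_zero 0 hv]
  have : gaussianPDF 0 v = fun x => ((gaussianPDFReal 0 v x).toNNReal : ℝ≥0∞) := by
    ext x; simp [gaussianPDF, ENNReal.ofReal]
  rw [this, integral_withDensity_eq_integral_smul
    ((measurable_gaussianPDFReal 0 v).real_toNNReal)]
  congr 1; ext x
  simp [NNReal.smul_def, Real.coe_toNNReal _ (gaussianPDFReal_nonneg 0 v x)]

lemma gauss_integrable (v : ℝ≥0) (hv : v ≠ 0) {g : ℝ → ℝ}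
    (hg : Integrable g (gaussianReal 0 v)) :
    Integrable (fun x => gaussianPDFReal 0 v x * g x) volume := by
  rw [gaussianReal_of_var_ne_zero 0 hv] at hg
  have hmeas := (measurable_gaussianPDFReal 0 v).real_toNNReal
  have : gaussianPDF 0 v = fun x => ((gaussianPDFReal 0 v x).toNNReal : ℝ≥0∞) := by
    ext x; simp [gaussianPDF, ENNReal.ofReal]
  rw [this, integrable_withDensity_iff_integrable_smul hmeas] at hg
  convert hg using 2 with x
  · rfl
  simp [NNReal.smul_def, Real.coe_toNNReal _ (gaussianPDFReal_nonneg 0 v x)]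

/-- Stein/Bussgang lemma for the centered Gaussian measure with variance `v > 0`:
`∫ x * f x ∂μ = v * ∫ f' x ∂μ` for a differentiable `f` with `x ↦ x * f x` and `f'`
`μ`-integrable and `f x * exp (-x²/(2v)) → 0` as `x → ±∞`. -/
theorem stein_bussgang_lemma (v : ℝ≥0) (hv : 0 < v)
    (f : ℝ → ℝ) (hf : Differentiable ℝ f)
    (hxf : Integrable (fun x => x * f x) (gaussianReal 0 v))
    (hf' : Integrable (deriv f) (gaussianReal 0 v))
    (htop : Tendsto (fun x : ℝ => f x * Real.exp (-x ^ 2 / (2 * (v : ℝ)))) atTop (nhds 0))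
    (hbot : Tendsto (fun x : ℝ => f x * Real.exp (-x ^ 2 / (2 * (v : ℝ)))) atBot (nhds 0)) :
    ∫ x, x * f x ∂(gaussianReal 0 v) = (v : ℝ) * ∫ x, deriv f x ∂(gaussianReal 0 v) := by
  have hv' : v ≠ 0 := hv.ne'
  have hvR : (0:ℝ) < (v:ℝ) := hv
  set C : ℝ := (Real.sqrt (2 * Real.pi * v))⁻¹ with hC
  have hCpos : 0 < C := by
    rw [hC]
    positivity
  have hpdf : ∀ x : ℝ, gaussianPDFReal 0 v x = C * Real.exp (-x ^ 2 / (2 * (v : ℝ))) := by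
    intro x
    simp [gaussianPDFReal, hC, sq]
  -- the function whose derivative is the integrand
  set g : ℝ → ℝ := fun x => -(v:ℝ) * (f x * Real.exp (-x ^ 2 / (2 * (v : ℝ)))) with hg
  have hderiv : ∀ x : ℝ, HasDerivAt g
      ((x * f x - (v:ℝ) * deriv f x) * Real.exp (-x ^ 2 / (2 * (v : ℝ)))) x := by
    intro x
    have h1 : HasDerivAt (fun x : ℝ => -x ^ 2 / (2 * (v : ℝ))) (-x / v) x := by
      have : HasDerivAt (fun x : ℝ => -x ^ 2 / (2 * (v : ℝ)))
          ((-(2 * x)) / (2 * (v:ℝ))) x := by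
        have := ((hasDerivAt_pow 2 x).neg).div_const (2 * (v:ℝ))
        simpa using this
      convert this using 1
      field_simp
    have h2 : HasDerivAt (fun x : ℝ => Real.exp (-x ^ 2 / (2 * (v : ℝ))))
        (Real.exp (-x ^ 2 / (2 * (v : ℝ))) * (-x / v)) x := h1.exp
    have h3 := ((hf x).hasDerivAt.mul h2).const_mul (-(v:ℝ))
    refine h3.congr_deriv ?_
    field_simp
    ring
  -- integrability of the combined integrand wrt volume
  have hint : Integrable
      (fun x => gaussianPDFReal 0 v x * (x * f x - (v:ℝ) * deriv f x)) volume :=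
    gauss_integrable v hv' (hxf.sub (hf'.const_mul _))
  have hint' : Integrable
      (fun x => (x * f x - (v:ℝ) * deriv f x) * Real.exp (-x ^ 2 / (2 * (v : ℝ)))) volume := by
    have := hint.const_mul C⁻¹
    convert this using 2 with x
    rw [hpdf x]
    field_simp
  -- limits of g
  have hgtop : Tendsto g atTop (nhds 0) := by
    have := htop.const_mul (-(v:ℝ))
    simpa [hg] using this
  have hgbot : Tendsto g atBot (nhds 0) := by
    have := hbot.const_mul (-(v:ℝ))
    simpa [hg] using this
  have key : ∫ x, (x * f x - (v:ℝ) * deriv f x) * Real.exp (-x ^ 2 / (2 * (v : ℝ))) = 0 := by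
    have := MeasureTheory.integral_of_hasDerivAt_of_tendsto hderiv hint' hgbot hgtop
    simpa using this
  have key2 : ∫ x, gaussianPDFReal 0 v x * (x * f x - (v:ℝ) * deriv f x) = 0 := by
    have : (fun x => gaussianPDFReal 0 v x * (x * f x - (v:ℝ) * deriv f x))
        = fun x => C * ((x * f x - (v:ℝ) * deriv f x) * Real.exp (-x ^ 2 / (2 * (v : ℝ)))) := by
      ext x; rw [hpdf x]; ring
    rw [this, integral_const_mul, key, mul_zero]
  have hsub : ∫ x, (x * f x - (v:ℝ) * deriv f x) ∂(gaussianReal 0 v) = 0 := by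
    rw [gauss_integral_eq v hv', key2]
  rw [integral_sub hxf (hf'.const_mul _), integral_const_mul] at hsub
  linarith
end

section
/- (Linear-transformation degeneracy of a parallel Wiener–Hammerstein model.) Let F = (ℤ → ℝ) be the space of discrete-time signals, let n ≥ 1, let H, S : Fin n → (F →ₗ[ℝ] F) be the front and back linear blocks, and let g : (Fin n → ℝ) → (Fin n → ℝ) be a MIMO static nonlinearity applied pointwise in time. Define the model output Φ(H,g,S)(u)(t) = ∑_{i} Sᵢ(τ ↦ g(j ↦ (Hⱼ u)(τ))ᵢ)(t). Let T and U be invertible n × n real matrices, and define the transformed model by H′ᵢ = ∑ⱼ Tᵢⱼ • Hⱼ, g′(z) = U·g(T⁻¹·z) (matrix–vector products), and S′ᵢ = ∑ⱼ (U⁻¹)ⱼᵢ • Sⱼ. Then for every input u : ℤ → ℝ, Φ(H′,g′,S′)(u) = Φ(H,g,S)(u). Hence infinitely many equivalent parallel Wiener–Hammerstein models are obtained by full-rank linear transformations between the front LTI blocks and the static nonlinearity and between the static nonlinearity and the back LTI blocks. -/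
/-- Output of a parallel Wiener–Hammerstein model with `n` branches: front linear blocks
`H i`, a MIMO static nonlinearity `g` applied pointwise in time, and back linear blocks
`S i`; the output is the sum over branches of `S i` applied to the `i`-th output of `g`. -/
def parWHOutput (n : ℕ) (H S : Fin n → ((ℤ → ℝ) →ₗ[ℝ] (ℤ → ℝ)))
    (g : (Fin n → ℝ) → (Fin n → ℝ)) (u : ℤ → ℝ) : ℤ → ℝ :=
  fun t => ∑ i, (S i) (fun τ => g (fun j => (H j u) τ) i) t

/-- Linear-transformation degeneracy of a parallel Wiener–Hammerstein model: for
invertible matrices `T` and `U`, transforming the front blocks by `T`, the MIMO static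
nonlinearity by `z ↦ U · g (T⁻¹ · z)`, and the back blocks by `U⁻¹` yields a model with
identical input–output behavior. -/
theorem parWH_linear_transformation_degeneracy (n : ℕ) (hn : 1 ≤ n)
    (H S : Fin n → ((ℤ → ℝ) →ₗ[ℝ] (ℤ → ℝ))) (g : (Fin n → ℝ) → (Fin n → ℝ))
    (T U : Matrix (Fin n) (Fin n) ℝ) (hT : IsUnit T.det) (hU : IsUnit U.det)
    (H' S' : Fin n → ((ℤ → ℝ) →ₗ[ℝ] (ℤ → ℝ))) (g' : (Fin n → ℝ) → (Fin n → ℝ))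
    (hH' : ∀ i, H' i = ∑ j, T i j • H j)
    (hg' : ∀ z, g' z = U.mulVec (g (T⁻¹.mulVec z)))
    (hS' : ∀ i, S' i = ∑ j, (U⁻¹) j i • S j) :
    ∀ u : ℤ → ℝ, parWHOutput n H' S' g' u = parWHOutput n H S g u := by
  intro u
  funext t
  simp only [parWHOutput]
  set f : Fin n → ℤ → ℝ := fun k τ => g (fun j => (H j u) τ) k with hf
  have hx : ∀ τ : ℤ, (fun j => (H' j u) τ) = T.mulVec (fun j => (H j u) τ) := by
    intro τ
    funext i
    rw [hH']
    simp [Matrix.mulVec, dotProduct, LinearMap.sum_apply, Finset.sum_apply]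
  have hg'x : ∀ (τ : ℤ) i, g' (fun j => (H' j u) τ) i = ∑ k, U i k * f k τ := by
    intro τ i
    rw [hx, hg', Matrix.mulVec_mulVec, Matrix.nonsing_inv_mul T hT, Matrix.one_mulVec]
    simp [Matrix.mulVec, dotProduct, hf]
  have key : ∀ i, (fun τ => g' (fun j => (H' j u) τ) i) = ∑ k, U i k • f k := by
    intro i; funext τ; simp [hg'x, Finset.sum_apply]
  calc ∑ i, (S' i) (fun τ => g' (fun j => (H' j u) τ) i) t
      = ∑ i, ∑ j, ∑ k, (U⁻¹) j i * (U i k * (S j (f k) t)) := by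
        refine Finset.sum_congr rfl fun i _ => ?_
        rw [key, hS']
        simp [LinearMap.sum_apply, Finset.sum_apply, map_sum, Finset.mul_sum]
        rw [Finset.sum_comm]
        exact Finset.sum_congr rfl fun j _ => Finset.sum_congr rfl fun k _ => by ring
    _ = ∑ j, ∑ k, (∑ i, (U⁻¹) j i * U i k) * (S j (f k) t) := by
        rw [Finset.sum_comm]
        refine Finset.sum_congr rfl fun j _ => ?_
        rw [Finset.sum_comm]
        refine Finset.sum_congr rfl fun k _ => ?_
        rw [Finset.sum_mul]
        exact Finset.sum_congr rfl fun i _ => by ring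
    _ = ∑ j, ∑ k, (U⁻¹ * U) j k * (S j (f k) t) := by
        simp [Matrix.mul_apply]
    _ = ∑ j, (S j) (f j) t := by
        rw [Matrix.nonsing_inv_mul U hU]
        refine Finset.sum_congr rfl fun j _ => ?_
        simp [Matrix.one_apply]
    _ = ∑ i, (S i) (fun τ => g (fun j => (H j u) τ) i) t := rfl
end
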